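/- Let K > 0, M ≥ 0, let h : [0,∞) → ℝ and φ : [0,∞) → ℝ be continuous with h(t) > 0 and |φ(t)| ≤ M for all t ≥ 0, and let ε : [0,∞) → ℝ be differentiable with ε′(t) = h(t)(−K ε(t) + φ(t)) for all t ≥ 0. Then |ε(t)| ≤ max(|ε(0)|, M/K) for all t ≥ 0; in particular ε is bounded. -/

import Mathlib

lemma scalar_iss_aux (K M C : ℝ) (hK : 0 < K)
    (h φ ε : ℝ → ℝ)
    (hhpos : ∀ t : ℝ, 0 ≤ t → 0 < h t)
    (hφM : ∀ t : ℝ, 0 ≤ t → φ t ≤ M)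
    (hε : ∀ t : ℝ, 0 ≤ t → HasDerivAt ε (h t * (-K * ε t + φ t)) t)
    (hC0 : ε 0 ≤ C) (hCM : M / K ≤ C) :
    ∀ t : ℝ, 0 ≤ t → ε t ≤ C := by
  have hMKC : M ≤ K * C := by
    have := (div_le_iff₀ hK).mp hCM
    linarith
  intro t ht
  refine le_of_forall_pos_le_add fun δ hδ => ?_
  have key := image_le_of_deriv_right_lt_deriv_boundary
    (f := ε) (f' := fun x => h x * (-K * ε x + φ x)) (a := 0) (b := t)
    (B := fun _ => C + δ) (B' := fun _ => 0)
    (fun x hx => (hε x hx.1).continuousAt.continuousWithinAt)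
    (fun x hx => (hε x hx.1).hasDerivWithinAt)
    (by simpa using by linarith : ε 0 ≤ C + δ)
    (fun x => hasDerivAt_const x (C + δ))
    ?_
  · exact key (Set.right_mem_Icc.mpr ht)
  · intro x hx hεx
    have hx0 : 0 ≤ x := hx.1
    have h1 : -K * ε x + φ x ≤ -(K * δ) := by
      have := hφM x hx0
      rw [hεx]
      nlinarith
    have : h x * (-K * ε x + φ x) < 0 :=
      mul_neg_of_pos_of_neg (hhpos x hx0) (lt_of_le_of_lt h1 (by nlinarith))
    simpa using this

/-- **ISS of the scalar ε-dynamics (proofs of Theorems 2 and 4, Furtat 2019).**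
If `ε′(t) = h(t)(−K ε(t) + φ(t))` with `h` continuous and positive, `|φ| ≤ M`, and `K > 0`,
then `|ε(t)| ≤ max(|ε(0)|, M/K)` for all `t ≥ 0`. -/
theorem scalar_iss (K M : ℝ) (hK : 0 < K) (hM : 0 ≤ M)
    (h φ : ℝ → ℝ)
    (hhc : ContinuousOn h (Set.Ici 0))
    (hφc : ContinuousOn φ (Set.Ici 0))
    (hhpos : ∀ t : ℝ, 0 ≤ t → 0 < h t)
    (hφM : ∀ t : ℝ, 0 ≤ t → |φ t| ≤ M)
    (ε : ℝ → ℝ)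
    (hε : ∀ t : ℝ, 0 ≤ t → HasDerivAt ε (h t * (-K * ε t + φ t)) t) :
    ∀ t : ℝ, 0 ≤ t → |ε t| ≤ max |ε 0| (M / K) := by
  set C := max |ε 0| (M / K) with hC
  have hCM : M / K ≤ C := le_max_right _ _
  have hC0 : |ε 0| ≤ C := le_max_left _ _
  have hup : ∀ t : ℝ, 0 ≤ t → ε t ≤ C :=
    scalar_iss_aux K M C hK h φ ε hhpos
      (fun t ht => (abs_le.mp (hφM t ht)).2)
      hε ((le_abs_self _).trans hC0) hCM
  have hlo : ∀ t : ℝ, 0 ≤ t → -ε t ≤ C := by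
    refine scalar_iss_aux K M C hK h (fun t => -φ t) (fun t => -ε t) hhpos
      (fun t ht => by have := (abs_le.mp (hφM t ht)).1; linarith)
      (fun t ht => ?_)
      (by linarith [neg_abs_le (ε 0), hC0]) hCM
    have : HasDerivAt (fun t => -ε t) (-(h t * (-K * ε t + φ t))) t := (hε t ht).neg
    convert this using 1
    ring
  intro t ht
  exact abs_le.mpr ⟨by linarith [hlo t ht], hup t ht⟩
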